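/- Let 0 < x_1 < x_2 < ⋯ < x_N ≤ T, set x_0 = 0, let K ∈ ℝ^{N×N} have entries K_{ij} = min(x_i, x_j), and for x ∈ [0,T] let κ(x) ∈ ℝ^N have entries κ(x)_i = min(x, x_i). Then for every v ∈ ℝ^N (with convention v_0 = 0): (a) if x ∈ [x_{m−1}, x_m] for some 1 ≤ m ≤ N, then κ(x)ᵀ K⁻¹ v = ((x_m − x)v_{m−1} + (x − x_{m−1})v_m)/(x_m − x_{m−1}) and min(x,x) − κ(x)ᵀ K⁻¹ κ(x) = (x_m − x)(x − x_{m−1})/(x_m − x_{m−1}); (b) if x ∈ [x_N, T], then κ(x)ᵀ K⁻¹ v = v_N and x − κ(x)ᵀ K⁻¹ κ(x) = x − x_N. -/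

import Mathlib

open Matrix

/-- The Gram matrix of the Brownian motion kernel `k(x,y) = min(x,y)` at points
`x_1 < ⋯ < x_N` (here `x (i+1)` is the `i`-th point, `0`-indexed). -/
noncomputable def gramBM (N : ℕ) (x : ℕ → ℝ) : Matrix (Fin N) (Fin N) ℝ :=
  Matrix.of fun i j => min (x (i.1 + 1)) (x (j.1 + 1))

/-- The kernel vector `κ(t)_i = min(t, x_i)`, `i = 1, …, N`. -/
noncomputable def kappaBM (N : ℕ) (x : ℕ → ℝ) (t : ℝ) : Fin N → ℝ :=
  fun i => min t (x (i.1 + 1))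

/-- Monotonicity of the points up to index `N`. -/
lemma BMaux_mono {N : ℕ} {x : ℕ → ℝ} (hmono : ∀ n < N, x n < x (n + 1)) :
    ∀ i j, i ≤ j → j ≤ N → x i ≤ x j := by
  intro i j hij hjN
  induction j with
  | zero => simp [Nat.le_zero.mp hij]
  | succ k ih =>
    rcases Nat.lt_or_ge i (k + 1) with h | h
    · exact le_trans (ih (by omega) (by omega)) (le_of_lt (hmono k (by omega)))
    · have : i = k + 1 := by omega
      simp [this]

/-- The `LDLᵀ` factorization of the Brownian motion Gram matrix. -/
lemma BMaux_factor (N : ℕ) (x : ℕ → ℝ) (hx0 : x 0 = 0)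
    (hmono : ∀ n < N, x n < x (n + 1)) :
    gramBM N x =
      (Matrix.of fun i j : Fin N => if j ≤ i then (1 : ℝ) else 0) *
        Matrix.diagonal (fun i : Fin N => x (i.1 + 1) - x i.1) *
      (Matrix.of fun i j : Fin N => if j ≤ i then (1 : ℝ) else 0)ᵀ := by
  have hxm := BMaux_mono hmono
  ext i j
  set M : ℕ := min i.1 j.1 with hM
  have hMN : M + 1 ≤ N := by have := i.2; have := j.2; omega
  have hsum : ∑ k : Fin N, ((if k ≤ i then (1:ℝ) else 0) * (x (k.1 + 1) - x k.1)) *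
      (if k ≤ j then (1:ℝ) else 0) = x (M + 1) := by
    have h1 : ∀ k : Fin N, ((if k ≤ i then (1:ℝ) else 0) * (x (k.1 + 1) - x k.1)) *
        (if k ≤ j then (1:ℝ) else 0) =
        (fun k : ℕ => if k ≤ M then (x (k + 1) - x k) else 0) k.1 := by
      intro k
      simp only [Fin.le_def]
      rcases le_or_gt k.1 M with h | h
      · rw [if_pos (show k.1 ≤ i.1 by omega), if_pos (show k.1 ≤ j.1 by omega), if_pos h]
        ring
      · rw [if_neg (show ¬ k.1 ≤ M by omega)]
        rcases Nat.lt_or_ge i.1 k.1 with h' | h'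
        · rw [if_neg (show ¬ k.1 ≤ i.1 by omega)]; ring
        · rw [if_neg (show ¬ k.1 ≤ j.1 by omega)]; ring
    rw [Finset.sum_congr rfl (fun k _ => h1 k),
      Fin.sum_univ_eq_sum_range (fun k : ℕ => if k ≤ M then (x (k + 1) - x k) else 0) N]
    have h2 : ∑ k ∈ Finset.range N, (if k ≤ M then (x (k + 1) - x k) else 0) =
        ∑ k ∈ Finset.range (M + 1), (if k ≤ M then (x (k + 1) - x k) else 0) := by
      refine (Finset.sum_subset (Finset.range_subset_range.2 hMN) ?_).symm
      intro k _ hk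
      simp only [Finset.mem_range, not_lt] at hk
      rw [if_neg (by omega)]
    rw [h2, Finset.sum_congr rfl (fun k hk => by
      rw [if_pos (by simpa using Nat.lt_succ_iff.mp (Finset.mem_range.mp hk))]),
      Finset.sum_range_sub x (M + 1), hx0, sub_zero]
  have hmin : min (x (i.1 + 1)) (x (j.1 + 1)) = x (M + 1) := by
    rcases le_total i.1 j.1 with h | h
    · rw [min_eq_left (hxm _ _ (by omega) (by omega)), hM, min_eq_left h]
    · rw [min_eq_right (hxm _ _ (by omega) (by omega)), hM, min_eq_right h]
  have hrhs : ((Matrix.of fun i j : Fin N => if j ≤ i then (1 : ℝ) else 0) *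
        Matrix.diagonal (fun i : Fin N => x (i.1 + 1) - x i.1) *
      (Matrix.of fun i j : Fin N => if j ≤ i then (1 : ℝ) else 0)ᵀ) i j =
      ∑ k : Fin N, ((if k ≤ i then (1:ℝ) else 0) * (x (k.1 + 1) - x k.1)) *
        (if k ≤ j then (1:ℝ) else 0) := by
    rw [Matrix.mul_apply]
    refine Finset.sum_congr rfl fun k _ => ?_
    rw [Matrix.mul_diagonal, Matrix.transpose_apply]
    simp [Matrix.of_apply]
  rw [hrhs, hsum]
  simpa [gramBM] using hmin

lemma BMaux_det_isUnit (N : ℕ) (x : ℕ → ℝ) (hx0 : x 0 = 0)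
    (hmono : ∀ n < N, x n < x (n + 1)) : IsUnit (gramBM N x).det := by
  rw [BMaux_factor N x hx0 hmono, Matrix.det_mul, Matrix.det_mul, Matrix.det_transpose]
  have hL : (Matrix.of fun i j : Fin N => if j ≤ i then (1 : ℝ) else 0).det = 1 := by
    rw [Matrix.det_of_lowerTriangular]
    · simp
    · intro i j hij
      simp only [OrderDual.toDual_lt_toDual] at hij
      simp [Matrix.of_apply, not_le.2 hij]
  rw [hL, Matrix.det_diagonal, one_mul, mul_one]
  refine isUnit_iff_ne_zero.2 (ne_of_gt (Finset.prod_pos fun i _ => ?_))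
  have := hmono i.1 i.2
  linarith

lemma BMaux_dot_inv (N : ℕ) (x : ℕ → ℝ) (hx0 : x 0 = 0)
    (hmono : ∀ n < N, x n < x (n + 1)) (t : ℝ) (w u : Fin N → ℝ)
    (hw : (gramBM N x).mulVec w = kappaBM N x t) :
    kappaBM N x t ⬝ᵥ (gramBM N x)⁻¹.mulVec u = w ⬝ᵥ u := by
  have hdet := BMaux_det_isUnit N x hx0 hmono
  have hsymm : (gramBM N x)ᵀ = gramBM N x := by
    ext i j; simp [gramBM, min_comm]
  rw [Matrix.dotProduct_mulVec, ← hw]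
  congr 1
  calc Matrix.vecMul ((gramBM N x).mulVec w) (gramBM N x)⁻¹
      = Matrix.vecMul (Matrix.vecMul w (gramBM N x)ᵀ) (gramBM N x)⁻¹ := by
        rw [Matrix.vecMul_transpose]
    _ = Matrix.vecMul w ((gramBM N x) * (gramBM N x)⁻¹) := by
        rw [hsymm, Matrix.vecMul_vecMul]
    _ = w := by rw [Matrix.mul_nonsing_inv _ hdet, Matrix.vecMul_one]

theorem posterior_mean_var_BM (N : ℕ) (T : ℝ) (x : ℕ → ℝ) (hx0 : x 0 = 0)
    (hmono : ∀ n < N, x n < x (n + 1)) (hxT : x N ≤ T)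
    (v : ℕ → ℝ) (hv0 : v 0 = 0) :
    (∀ m, 1 ≤ m → m ≤ N → ∀ t : ℝ, x (m - 1) ≤ t → t ≤ x m →
      (kappaBM N x t ⬝ᵥ (gramBM N x)⁻¹.mulVec (fun i : Fin N => v (i.1 + 1)) =
        ((x m - t) * v (m - 1) + (t - x (m - 1)) * v m) / (x m - x (m - 1)) ∧
      min t t - kappaBM N x t ⬝ᵥ (gramBM N x)⁻¹.mulVec (kappaBM N x t) =
        (x m - t) * (t - x (m - 1)) / (x m - x (m - 1)))) ∧
    (∀ t : ℝ, x N ≤ t → t ≤ T →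
      (kappaBM N x t ⬝ᵥ (gramBM N x)⁻¹.mulVec (fun i : Fin N => v (i.1 + 1)) = v N ∧
      t - kappaBM N x t ⬝ᵥ (gramBM N x)⁻¹.mulVec (kappaBM N x t) = t - x N)) := by
  have hxm := BMaux_mono hmono
  constructor
  · intro m h1 h2 t ht1 ht2
    obtain ⟨m', rfl⟩ : ∃ m', m = m' + 1 := ⟨m - 1, by omega⟩
    simp only [Nat.add_sub_cancel] at *
    have hm'N : m' < N := by omega
    have hΔ : 0 < x (m' + 1) - x m' := by have := hmono m' hm'N; linarith
    rcases Nat.eq_zero_or_pos m' with hm0 | hm1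
    · -- first interval: t ∈ [0, x 1]
      subst hm0
      have hx1 : 0 < x 1 := by rw [← hx0]; exact hmono 0 (by omega)
      set w : Fin N → ℝ := Pi.single ⟨0, by omega⟩ (t / x 1) with hwdef
      have hw : (gramBM N x).mulVec w = kappaBM N x t := by
        funext i
        rw [hwdef, Matrix.mulVec_single]
        have hle : x 1 ≤ x (i.1 + 1) := hxm 1 (i.1 + 1) (by omega) (by omega)
        have htle : t ≤ x (i.1 + 1) := le_trans ht2 hle
        simp only [gramBM, kappaBM, Matrix.of_apply, Pi.smul_apply, Matrix.col_apply, op_smul_eq_mul]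
        rw [min_eq_right hle, min_eq_left htle]
        field_simp
      constructor
      · rw [BMaux_dot_inv N x hx0 hmono t w _ hw, hwdef, single_dotProduct]
        rw [hx0, hv0]
        simp only [zero_add, sub_zero, mul_zero]
        field_simp
      · rw [BMaux_dot_inv N x hx0 hmono t w _ hw, hwdef, single_dotProduct]
        have ht1' : x 0 ≤ t := ht1
        rw [hx0] at ht1' ⊢
        simp only [kappaBM]
        rw [min_self, min_eq_left ht2]
        simp only [zero_add, sub_zero]
        field_simp
    · -- interior interval: t ∈ [x m', x (m'+1)], m' ≥ 1
      set a : ℝ := (x (m' + 1) - t) / (x (m' + 1) - x m') with hadef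
      set b : ℝ := (t - x m') / (x (m' + 1) - x m') with hbdef
      set j1 : Fin N := ⟨m' - 1, by omega⟩ with hj1
      set j2 : Fin N := ⟨m', by omega⟩ with hj2
      set w : Fin N → ℝ := Pi.single j1 a + Pi.single j2 b with hwdef
      have hj1v : j1.1 + 1 = m' := by simp [hj1]; omega
      have hj2v : j2.1 + 1 = m' + 1 := by simp [hj2]
      have hw : (gramBM N x).mulVec w = kappaBM N x t := by
        funext i
        rw [hwdef, Matrix.mulVec_add, Matrix.mulVec_single, Matrix.mulVec_single]
        simp only [gramBM, kappaBM, Matrix.of_apply, Pi.add_apply, Pi.smul_apply, Matrix.col_apply, op_smul_eq_mul]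
        rw [hj1v, hj2v]
        rcases Nat.lt_or_ge i.1 m' with hi | hi
        · have h1 : x (i.1 + 1) ≤ x m' := hxm _ _ (by omega) (by omega)
          have h2 : x (i.1 + 1) ≤ x (m' + 1) := hxm _ _ (by omega) (by omega)
          have h3 : x (i.1 + 1) ≤ t := le_trans h1 ht1
          rw [min_eq_left h1, min_eq_left h2, min_eq_right h3]
          rw [hadef, hbdef]
          field_simp
          ring
        · have h1 : x m' ≤ x (i.1 + 1) := hxm _ _ (by omega) (by omega)
          have h2 : x (m' + 1) ≤ x (i.1 + 1) := hxm _ _ (by omega) (by omega)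
          have h3 : t ≤ x (i.1 + 1) := le_trans ht2 h2
          rw [min_eq_right h1, min_eq_right h2, min_eq_left h3]
          rw [hadef, hbdef]
          field_simp
          ring
      have hne : j1 ≠ j2 := by
        simp only [hj1, hj2, ne_eq, Fin.mk.injEq]
        omega
      constructor
      · rw [BMaux_dot_inv N x hx0 hmono t w _ hw, hwdef, add_dotProduct,
          single_dotProduct, single_dotProduct]
        simp only [hj1v, hj2v]
        rw [hadef, hbdef]
        field_simp
      · rw [BMaux_dot_inv N x hx0 hmono t w _ hw, hwdef, add_dotProduct,
          single_dotProduct, single_dotProduct]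
        simp only [kappaBM]
        rw [hj1v, hj2v, min_self, min_eq_right ht1, min_eq_left ht2]
        rw [hadef, hbdef]
        field_simp
        ring
  · intro t ht1 ht2
    rcases Nat.eq_zero_or_pos N with hN0 | hN1
    · subst hN0
      constructor
      · simp [dotProduct, hv0]
      · simp [dotProduct, hx0]
    · obtain ⟨n, rfl⟩ : ∃ n, N = n + 1 := ⟨N - 1, by omega⟩
      set w : Fin (n + 1) → ℝ := Pi.single ⟨n, by omega⟩ 1 with hwdef
      have hw : (gramBM (n + 1) x).mulVec w = kappaBM (n + 1) x t := by
        funext i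
        rw [hwdef, Matrix.mulVec_single]
        have hle : x (i.1 + 1) ≤ x (n + 1) := hxm _ _ (by omega) (by omega)
        have htle : x (i.1 + 1) ≤ t := le_trans hle ht1
        simp only [gramBM, kappaBM, Matrix.of_apply, Pi.smul_apply, Matrix.col_apply, op_smul_eq_mul]
        rw [min_eq_left hle, min_eq_right htle, mul_one]
      constructor
      · rw [BMaux_dot_inv (n + 1) x hx0 hmono t w _ hw, hwdef, single_dotProduct]
        simp
      · rw [BMaux_dot_inv (n + 1) x hx0 hmono t w _ hw, hwdef, single_dotProduct]
        simp only [kappaBM]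
        rw [min_eq_right ht1, one_mul]
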